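/- Let β ≥ 2 be an integer and define u(z) = (1−|z|²)^{2β−1}/|1−z|^{2β} for z ∈ 𝔻. Define a = Σ_{k=0}^{2β−2} Σ_{j=0}^{k} (−1)^j · C(2β−1, j) · C(k−j+β−1, β−1)² and b = − Σ_{k=1}^{2β−2} 2k · Σ_{j=0}^{k} (−1)^j · C(2β−1, j) · C(k−j+β−1, β−1)², where C(n,m) denotes the binomial coefficient. Then there exists a constant K > 0 such that | (1/(2π)) ∫₀^{2π} u(r e^{iθ}) dθ − a − b·(1−r) | ≤ K·(1−r)² for all r ∈ [0,1). -/

import Mathlib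

open Real

/-- The building block function `u(z) = (1-|z|²)^(2β-1) / |1-z|^(2β)`. -/
noncomputable def bblock (β : ℕ) (z : ℂ) : ℝ :=
  (1 - ‖z‖ ^ 2) ^ (2 * β - 1) / ‖1 - z‖ ^ (2 * β)

/-- `a = Σ_{k=0}^{2β-2} Σ_{j=0}^{k} (−1)^j C(2β−1,j) C(k−j+β−1,β−1)²`. -/
noncomputable def aCoef (β : ℕ) : ℝ :=
  ∑ k ∈ Finset.range (2 * β - 1), ∑ j ∈ Finset.range (k + 1),
    (-1 : ℝ) ^ j * (Nat.choose (2 * β - 1) j : ℝ) *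
      (Nat.choose (k - j + β - 1) (β - 1) : ℝ) ^ 2

/-- `b = −Σ_{k=1}^{2β-2} 2k Σ_{j=0}^{k} (−1)^j C(2β−1,j) C(k−j+β−1,β−1)²`. -/
noncomputable def bCoef (β : ℕ) : ℝ :=
  -∑ k ∈ Finset.Icc 1 (2 * β - 2), (2 * k : ℝ) *
    ∑ j ∈ Finset.range (k + 1),
      (-1 : ℝ) ^ j * (Nat.choose (2 * β - 1) j : ℝ) *
        (Nat.choose (k - j + β - 1) (β - 1) : ℝ) ^ 2

namespace Stmt1Aux

open Finset

noncomputable def A (β n : ℕ) : ℝ := ((n + (β - 1)).choose (β - 1) : ℝ)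

noncomputable def cK (β k : ℕ) : ℝ :=
  ∑ j ∈ Finset.range (k + 1),
    (-1 : ℝ) ^ j * ((2 * β - 1).choose j : ℝ) * (A β (k - j)) ^ 2

lemma A_nonneg (β n : ℕ) : 0 ≤ A β n := Nat.cast_nonneg _

/-- iterated forward difference of a polynomial of degree < m vanishes -/
lemma fwdDiff_poly (m : ℕ) : ∀ P : Polynomial ℝ, P.degree < (m : ℕ) → ∀ y : ℝ,
    (fwdDiff 1)^[m] (fun t ↦ P.eval t) y = 0 := by
  induction m with
  | zero =>
    intro P hP y
    have : P = 0 := by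
      rw [← Polynomial.degree_eq_bot]
      exact Nat.WithBot.lt_zero_iff.mp (by exact_mod_cast hP)
    simp [this]
  | succ m ih =>
    intro P hP y
    rcases eq_or_ne P 0 with rfl | hP0
    · simp only [Polynomial.eval_zero]
      have : (fun _ : ℝ ↦ (0:ℝ)) = fun t ↦ (0:Polynomial ℝ).eval t := by simp
      rw [Function.iterate_succ_apply]
      have h0 : fwdDiff (1:ℝ) (fun _ : ℝ ↦ (0:ℝ)) = fun _ ↦ 0 := by
        ext t; simp [fwdDiff]
      rw [h0]
      simpa using ih 0 (by simp [Polynomial.degree_zero]) y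
    · set Q : Polynomial ℝ := Polynomial.taylor 1 P - P with hQ
      have h2 : Polynomial.taylor (1:ℝ) P ≠ 0 := fun h => hP0 (by
        have := Polynomial.taylor_injective (1:ℝ) (a₁ := P) (a₂ := 0) (by simpa using h)
        simpa using this)
      have hdeq : (Polynomial.taylor (1:ℝ) P).degree = P.degree := by
        rw [Polynomial.degree_eq_natDegree h2, Polynomial.degree_eq_natDegree hP0,
          Polynomial.natDegree_taylor]
      have hd : Q.degree < P.degree := by
        rw [hQ, ← hdeq]
        apply Polynomial.degree_sub_lt hdeq h2
        have hnd : (Polynomial.X + 1 : Polynomial ℝ).natDegree = 1 := by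
          simpa using Polynomial.natDegree_X_add_C (1:ℝ)
        have hlc : (Polynomial.X + 1 : Polynomial ℝ).leadingCoeff = 1 := by
          simpa using Polynomial.leadingCoeff_X_add_C (1:ℝ)
        rw [Polynomial.taylor_apply]
        rw [Polynomial.leadingCoeff_comp (by simp [hnd])]
        simp [hlc]
      have hdm : Q.degree < (m : ℕ) := by
        have hPle : P.degree ≤ (m : ℕ) := by
          rw [Polynomial.degree_eq_natDegree hP0] at hP ⊢
          exact_mod_cast Nat.lt_succ_iff.mp (by exact_mod_cast hP)
        exact lt_of_lt_of_le hd hPle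
      have hstep : fwdDiff (1:ℝ) (fun t ↦ P.eval t) = fun t ↦ Q.eval t := by
        ext t
        simp [fwdDiff, hQ, Polynomial.taylor_apply, Polynomial.eval_comp]
      rw [Function.iterate_succ_apply, hstep]
      exact ih Q hdm y

/-- the elementary Taylor-type bound -/
lemma pow_taylor_bound (x : ℝ) (h0 : 0 ≤ x) (h1 : x ≤ 1) (n : ℕ) :
    |x ^ n - 1 + n * (1 - x)| ≤ (n : ℝ) ^ 2 * (1 - x) ^ 2 := by
  have hgeom : x ^ n - 1 + n * (1 - x) = (1 - x) * ∑ i ∈ range n, (1 - x ^ i) := by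
    have h := geom_sum_mul x n
    have : ∑ i ∈ range n, (1 - x ^ i) = (n : ℝ) - ∑ i ∈ range n, x ^ i := by
      rw [Finset.sum_sub_distrib]; simp
    rw [this]; nlinarith [h]
  have hterm : ∀ i ∈ range n, 0 ≤ 1 - x ^ i ∧ 1 - x ^ i ≤ (n:ℝ) * (1 - x) := by
    intro i hi
    constructor
    · nlinarith [pow_le_one₀ h0 h1 (n := i)]
    · have hb : 1 + (i:ℝ) * (x - 1) ≤ x ^ i := by
        have := one_add_mul_le_pow (a := x - 1) (by linarith) i
        simpa using this
      have hin : (i:ℝ) ≤ n := by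
        exact_mod_cast (Finset.mem_range.mp hi).le
      nlinarith
  have hsum0 : 0 ≤ ∑ i ∈ range n, (1 - x ^ i) :=
    Finset.sum_nonneg fun i hi => (hterm i hi).1
  have hsum : ∑ i ∈ range n, (1 - x ^ i) ≤ (n:ℝ) * ((n:ℝ) * (1 - x)) := by
    calc ∑ i ∈ range n, (1 - x ^ i) ≤ ∑ _i ∈ range n, (n:ℝ) * (1 - x) :=
          Finset.sum_le_sum fun i hi => (hterm i hi).2
      _ = (n:ℝ) * ((n:ℝ) * (1 - x)) := by simp [mul_comm, mul_assoc]
  rw [hgeom, abs_of_nonneg (by nlinarith)]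
  nlinarith

/-- The polynomial representing `n ↦ A β n ^ 2`. -/
noncomputable def Apoly (β : ℕ) : Polynomial ℝ :=
  (Polynomial.C ((((β - 1).factorial : ℝ))⁻¹) *
    ∏ i ∈ Finset.range (β - 1), (Polynomial.X + Polynomial.C ((i : ℝ) + 1))) ^ 2

lemma Apoly_eval (β : ℕ) (n : ℕ) : (Apoly β).eval (n : ℝ) = A β n ^ 2 := by
  have hprod : ∀ k : ℕ, ∏ i ∈ Finset.range k, ((n : ℝ) + ((i : ℝ) + 1))
      = ((n + 1).ascFactorial k : ℝ) := by
    intro k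
    induction k with
    | zero => simp
    | succ k ih =>
      rw [Finset.prod_range_succ, ih, Nat.ascFactorial_succ]
      push_cast; ring
  have h1 : (Apoly β).eval (n : ℝ)
      = ((((β - 1).factorial : ℝ))⁻¹ * ((n + 1).ascFactorial (β - 1) : ℝ)) ^ 2 := by
    simp only [Apoly, Polynomial.eval_pow, Polynomial.eval_mul, Polynomial.eval_C,
      Polynomial.eval_prod, Polynomial.eval_add, Polynomial.eval_X]
    rw [← hprod (β - 1)]
  rw [h1, Nat.ascFactorial_eq_factorial_mul_choose]
  have hfac : ((β - 1).factorial : ℝ) ≠ 0 := by exact_mod_cast (β - 1).factorial_ne_zero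
  unfold A
  push_cast
  rw [inv_mul_cancel_left₀ hfac]

lemma Apoly_degree (β : ℕ) : (Apoly β).degree ≤ ((2 * β - 2 : ℕ) : WithBot ℕ) := by
  have h1 : (Polynomial.C ((((β - 1).factorial : ℝ))⁻¹) *
      ∏ i ∈ Finset.range (β - 1), (Polynomial.X + Polynomial.C ((i : ℝ) + 1))).natDegree
      ≤ β - 1 := by
    refine le_trans (Polynomial.natDegree_mul_le) ?_
    simp only [Polynomial.natDegree_C, zero_add]
    refine le_trans (Polynomial.natDegree_prod_le _ _) ?_
    calc ∑ i ∈ Finset.range (β - 1), (Polynomial.X + Polynomial.C ((i : ℝ) + 1)).natDegree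
        ≤ ∑ _i ∈ Finset.range (β - 1), 1 := by
          refine Finset.sum_le_sum fun i _ => ?_
          exact le_of_eq (Polynomial.natDegree_X_add_C _)
      _ = β - 1 := by simp
  have h2 : (Apoly β).natDegree ≤ 2 * β - 2 := by
    unfold Apoly
    refine le_trans (Polynomial.natDegree_pow_le) ?_
    omega
  calc (Apoly β).degree ≤ ((Apoly β).natDegree : WithBot ℕ) := Polynomial.degree_le_natDegree
    _ ≤ ((2 * β - 2 : ℕ) : WithBot ℕ) := by exact_mod_cast h2

lemma cK_vanish (β : ℕ) (hβ : 2 ≤ β) (k : ℕ) (hk : 2 * β - 1 ≤ k) : cK β k = 0 := by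
  set m := 2 * β - 1 with hm
  have hsub : Finset.range (m + 1) ⊆ Finset.range (k + 1) := by
    apply Finset.range_subset_range.mpr; omega
  have hres : cK β k = ∑ j ∈ Finset.range (m + 1),
      (-1 : ℝ) ^ j * ((2 * β - 1).choose j : ℝ) * (A β (k - j)) ^ 2 := by
    rw [cK, ← Finset.sum_subset hsub]
    intro j hj1 hj2
    have hjm : m + 1 ≤ j := by
      by_contra h
      exact hj2 (Finset.mem_range.mpr (by omega))
    rw [Nat.choose_eq_zero_of_lt (by omega)]
    simp
  have heval : ∀ j ∈ Finset.range (m + 1),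
      (-1 : ℝ) ^ j * ((2 * β - 1).choose j : ℝ) * (A β (k - j)) ^ 2
      = (-1 : ℝ) ^ j * (m.choose j : ℝ) * (Apoly β).eval ((k : ℝ) - j) := by
    intro j hj
    have hjk : j ≤ k := by
      have := Finset.mem_range.mp hj; omega
    have hc : ((k - j : ℕ) : ℝ) = (k : ℝ) - j := by
      push_cast [Nat.cast_sub hjk]; ring
    rw [← hm, ← hc, Apoly_eval]
  rw [hres, Finset.sum_congr rfl heval]
  have hfd := fwdDiff_iter_eq_sum_shift (1 : ℝ) (fun t ↦ (Apoly β).eval t) m ((k : ℝ) - m)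
  have hzero : (fwdDiff 1)^[m] (fun t ↦ (Apoly β).eval t) ((k : ℝ) - m) = 0 := by
    apply fwdDiff_poly
    refine lt_of_le_of_lt (Apoly_degree β) ?_
    exact_mod_cast (by omega : 2 * β - 2 < m)
  rw [hzero] at hfd
  have hmk : (m : ℝ) ≤ (k : ℝ) := by exact_mod_cast hk
  calc ∑ j ∈ Finset.range (m + 1), (-1 : ℝ) ^ j * (m.choose j : ℝ) * (Apoly β).eval ((k : ℝ) - j)
      = ∑ j ∈ Finset.range (m + 1),
          ((-1 : ℤ) ^ (m - j) * (m.choose j : ℤ)) • (Apoly β).eval (((k : ℝ) - m) + j • (1 : ℝ)) := by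
        rw [← Finset.sum_range_reflect]
        apply Finset.sum_congr rfl
        intro j hj
        have hjm : j ≤ m := by have := Finset.mem_range.mp hj; omega
        have h1 : m + 1 - 1 - j = m - j := by omega
        have h2 : ((m - j : ℕ) : ℝ) = (m : ℝ) - j := by
          push_cast [Nat.cast_sub hjm]; ring
        rw [h1, Nat.choose_symm hjm]
        rw [h2]
        have h3 : (k : ℝ) - ((m : ℝ) - (j : ℝ)) = ((k : ℝ) - m) + j • (1 : ℝ) := by
          simp [nsmul_eq_mul]; ring
        rw [h3]
        push_cast [zsmul_eq_mul]
        ring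
    _ = 0 := hfd.symm
lemma hasSum_A_complex (β : ℕ) (hβ : 1 ≤ β) {z : ℂ} (hz : ‖z‖ < 1) :
    HasSum (fun n ↦ ((A β n : ℝ) : ℂ) * z ^ n) (1 / (1 - z) ^ β) := by
  have h := hasSum_choose_mul_geometric_of_norm_lt_one (𝕜 := ℂ) (β - 1) hz
  have hβ' : β - 1 + 1 = β := by omega
  rw [hβ'] at h
  have hfe : (fun n ↦ ((A β n : ℝ) : ℂ) * z ^ n)
      = fun n ↦ (((n + (β - 1)).choose (β - 1) : ℕ) : ℂ) * z ^ n := by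
    funext n; unfold A; push_cast; ring
  rw [hfe]
  exact h

lemma summable_A_real (β : ℕ) {x : ℝ} (h0 : 0 ≤ x) (hx : x < 1) :
    Summable (fun n ↦ A β n * x ^ n) := by
  have h := hasSum_choose_mul_geometric_of_norm_lt_one (𝕜 := ℝ) (β - 1)
    (by rwa [Real.norm_eq_abs, abs_of_nonneg h0])
  exact h.summable.congr fun n => by unfold A; push_cast; ring

lemma summable_A_sq (β : ℕ) {r : ℝ} (h0 : 0 ≤ r) (hr : r < 1) :
    Summable (fun n ↦ A β n ^ 2 * r ^ (2 * n)) := by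
  have hs := summable_A_real β h0 hr
  have hnn : ∀ n, 0 ≤ A β n * r ^ n := fun n =>
    mul_nonneg (A_nonneg β n) (pow_nonneg h0 n)
  have hb : ∀ n, A β n * r ^ n ≤ ∑' n, A β n * r ^ n := fun n =>
    Summable.le_tsum hs n fun j _ => hnn j
  refine Summable.of_nonneg_of_le
    (fun n => mul_nonneg (sq_nonneg _) (pow_nonneg h0 _)) (fun n => ?_)
    (hs.mul_left (∑' n, A β n * r ^ n))
  have h1 : A β n ^ 2 * r ^ (2 * n) = (A β n * r ^ n) * (A β n * r ^ n) := by ring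
  rw [h1]
  exact mul_le_mul_of_nonneg_right (hb n) (hnn n)

lemma summable_norm_A_complex (β : ℕ) {z : ℂ} (h0 : 0 ≤ ‖z‖) (hz : ‖z‖ < 1) :
    Summable (fun n ↦ ‖((A β n : ℝ) : ℂ) * z ^ n‖) := by
  refine (summable_A_real β h0 hz).congr fun n => ?_
  rw [norm_mul, norm_pow, Complex.norm_real, Real.norm_eq_abs,
    abs_of_nonneg (A_nonneg β n)]

/-- pointwise expansion of `1/|1-z|^(2β)` as a double cosine series -/
lemma hasSum_pt (β : ℕ) (hβ : 1 ≤ β) (r θ : ℝ) (h0 : 0 ≤ r) (hr : r < 1) :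
    HasSum (fun p : ℕ × ℕ ↦
        A β p.1 * A β p.2 * r ^ (p.1 + p.2) * Real.cos (((p.1 : ℝ) - p.2) * θ))
      ((‖1 - (r : ℂ) * Complex.exp ((θ : ℂ) * Complex.I)‖ ^ (2 * β))⁻¹) := by
  set z : ℂ := (r : ℂ) * Complex.exp ((θ : ℂ) * Complex.I) with hzdef
  have hnz : ‖z‖ = r := by
    rw [hzdef, norm_mul, Complex.norm_real, Real.norm_eq_abs, abs_of_nonneg h0,
      Complex.norm_exp_ofReal_mul_I, mul_one]
  have hz : ‖z‖ < 1 := by rw [hnz]; exact hr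
  have hzc : ‖(starRingEnd ℂ) z‖ < 1 := by rwa [RCLike.norm_conj]
  have h1 := hasSum_A_complex β hβ hz
  have h2 := hasSum_A_complex β hβ hzc
  have hn1 := summable_norm_A_complex β (norm_nonneg z) hz
  have hn2 := summable_norm_A_complex β (norm_nonneg _) hzc
  have hsummable := summable_mul_of_summable_norm hn1 hn2
  have hmul := h1.mul h2 hsummable
  have hre := Complex.reCLM.hasSum hmul
  -- identify the sum
  have hconj : (1 : ℂ) / (1 - (starRingEnd ℂ) z) ^ β
      = (starRingEnd ℂ) (1 / (1 - z) ^ β) := by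
    rw [map_div₀, map_pow, map_sub, map_one]
  have hns : Complex.normSq (1 / (1 - z) ^ β) = (‖1 - z‖ ^ (2 * β))⁻¹ := by
    rw [← Complex.sq_norm, norm_div, norm_one, norm_pow]
    rw [div_pow, one_pow, ← pow_mul, mul_comm β 2]
    exact one_div _
  have hval : Complex.reCLM ((1 / (1 - z) ^ β) * (1 / (1 - (starRingEnd ℂ) z) ^ β))
      = (‖1 - z‖ ^ (2 * β))⁻¹ := by
    rw [hconj, Complex.mul_conj]
    simp only [Complex.reCLM_apply, Complex.ofReal_re]
    exact hns
  rw [hval] at hre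
  -- identify the terms
  refine hre.congr_fun fun p => ?_
  obtain ⟨n, m⟩ := p
  have e1 : z ^ n = ((r ^ n : ℝ) : ℂ) * Complex.exp ((((n : ℝ) * θ : ℝ) : ℂ) * Complex.I) := by
    rw [hzdef, mul_pow, ← Complex.exp_nat_mul]
    push_cast; ring_nf
  have hconjz : (starRingEnd ℂ) z = (r : ℂ) * Complex.exp (((-θ : ℝ) : ℂ) * Complex.I) := by
    rw [hzdef, map_mul, Complex.conj_ofReal, ← Complex.exp_conj]
    congr 1
    rw [map_mul, Complex.conj_ofReal, Complex.conj_I]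
    push_cast; ring
  have e2 : ((starRingEnd ℂ) z) ^ m
      = ((r ^ m : ℝ) : ℂ) * Complex.exp ((((-(m : ℝ)) * θ : ℝ) : ℂ) * Complex.I) := by
    rw [hconjz, mul_pow, ← Complex.exp_nat_mul]
    push_cast; ring_nf
  show A β n * A β m * r ^ (n + m) * Real.cos (((n : ℝ) - m) * θ)
      = Complex.reCLM (((A β n : ℝ) : ℂ) * z ^ n * (((A β m : ℝ) : ℂ) * ((starRingEnd ℂ) z) ^ m))
  rw [e1, e2]
  have key : ((A β n : ℝ) : ℂ) * (((r ^ n : ℝ) : ℂ) * Complex.exp ((((n : ℝ) * θ : ℝ) : ℂ) * Complex.I))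
      * (((A β m : ℝ) : ℂ) * (((r ^ m : ℝ) : ℂ) * Complex.exp ((((-(m : ℝ)) * θ : ℝ) : ℂ) * Complex.I)))
      = ((A β n * A β m * r ^ (n + m) : ℝ) : ℂ)
        * Complex.exp (((((n : ℝ) - m) * θ : ℝ) : ℂ) * Complex.I) := by
    rw [show ((((n : ℝ) - m) * θ : ℝ) : ℂ) * Complex.I
        = (((n : ℝ) * θ : ℝ) : ℂ) * Complex.I + (((-(m : ℝ)) * θ : ℝ) : ℂ) * Complex.I by
      push_cast; ring]
    rw [Complex.exp_add]
    push_cast; ring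
  rw [key]
  simp only [Complex.reCLM_apply, Complex.re_ofReal_mul, Complex.exp_ofReal_mul_I_re]
lemma integral_term (n m : ℕ) (c : ℝ) :
    ∫ θ in (0:ℝ)..(2*π), c * Real.cos (((n:ℝ) - m) * θ)
      = if n = m then c * (2*π) else 0 := by
  rw [intervalIntegral.integral_const_mul]
  by_cases h : n = m
  · subst h
    simp [intervalIntegral.integral_const]
  · have hc : ((n:ℝ) - m) ≠ 0 := by
      rw [sub_ne_zero]
      exact_mod_cast fun hh => h (Nat.cast_injective hh)
    rw [if_neg h]
    have := intervalIntegral.integral_comp_mul_left (a := (0:ℝ)) (b := 2*π)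
      (f := Real.cos) (c := (n:ℝ) - m) hc
    rw [this]
    rw [integral_cos]
    have h1 : Real.sin (((n:ℝ) - m) * (2*π)) = 0 := by
      have : ((n:ℝ) - m) * (2*π) = ((2*((n:ℤ) - m) : ℤ) : ℝ) * π := by push_cast; ring
      rw [this, Real.sin_int_mul_pi]
    have h2 : Real.sin (((n:ℝ) - m) * 0) = 0 := by simp
    rw [h1, h2]
    simp

lemma tsum_diag (β : ℕ) {r : ℝ} (h0 : 0 ≤ r) (hr : r < 1) :
    ∑' p : ℕ × ℕ, (if p.1 = p.2 then A β p.1 * A β p.2 * r ^ (p.1 + p.2) * (2*π) else 0)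
      = (∑' n, A β n ^ 2 * r ^ (2*n)) * (2*π) := by
  set F : ℕ × ℕ → ℝ := fun p =>
    if p.1 = p.2 then A β p.1 * A β p.2 * r ^ (p.1 + p.2) * (2*π) else 0 with hF
  have hg : Function.Injective (fun n : ℕ => ((n, n) : ℕ × ℕ)) := by
    intro a b hab; simpa using congrArg Prod.fst hab
  have hvanish : ∀ p ∉ Set.range (fun n : ℕ => ((n, n) : ℕ × ℕ)), F p = 0 := by
    intro p hp
    have : p.1 ≠ p.2 := by
      intro hh
      exact hp ⟨p.1, by rw [Prod.ext_iff]; exact ⟨rfl, hh⟩⟩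
    simp [hF, this]
  have hcomp : (F ∘ fun n : ℕ => ((n, n) : ℕ × ℕ))
      = fun n => (A β n ^ 2 * r ^ (2*n)) * (2*π) := by
    funext n
    simp only [hF, Function.comp_apply, if_pos rfl]
    ring_nf
    congr 1 <;> ring
  have hs : HasSum (F ∘ fun n : ℕ => ((n, n) : ℕ × ℕ))
      ((∑' n, A β n ^ 2 * r ^ (2*n)) * (2*π)) := by
    rw [hcomp]
    exact (summable_A_sq β h0 hr).hasSum.mul_right _
  exact ((hg.hasSum_iff hvanish).mp hs).tsum_eq

lemma mean_value (β : ℕ) (hβ : 2 ≤ β) (r : ℝ) (h0 : 0 ≤ r) (hr : r < 1) :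
    (1/(2*π)) * (∫ θ in (0:ℝ)..(2*π),
        bblock β ((r : ℂ) * Complex.exp ((θ : ℂ) * Complex.I)))
      = ∑ k ∈ Finset.range (2*β-1), cK β k * r ^ (2*k) := by
  have hβ1 : 1 ≤ β := by omega
  have hπ : (0:ℝ) < 2*π := by positivity
  -- Step A/B : rewrite the integrand
  have habs : ∀ θ : ℝ, ‖(r : ℂ) * Complex.exp ((θ : ℂ) * Complex.I)‖ = r := by
    intro θ
    rw [norm_mul, Complex.norm_real, Real.norm_eq_abs, abs_of_nonneg h0]
    have : ((θ : ℂ) * Complex.I) = ((θ:ℝ) : ℂ) * Complex.I := rfl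
    rw [this, Complex.norm_exp_ofReal_mul_I, mul_one]
  have hb : ∀ θ : ℝ, bblock β ((r : ℂ) * Complex.exp ((θ : ℂ) * Complex.I))
      = (1 - r^2)^(2*β-1) *
        ((‖1 - (r : ℂ) * Complex.exp ((θ : ℂ) * Complex.I)‖ ^ (2*β))⁻¹) := by
    intro θ
    unfold bblock
    rw [habs θ, div_eq_mul_inv]
  simp only [hb]
  rw [intervalIntegral.integral_const_mul]
  -- Step C : compute the inner integral
  set T : ℕ × ℕ → ℝ → ℝ := fun p θ =>
    A β p.1 * A β p.2 * r ^ (p.1 + p.2) * Real.cos (((p.1 : ℝ) - p.2) * θ) with hT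
  have hpt : ∀ θ : ℝ,
      ((‖1 - (r : ℂ) * Complex.exp ((θ : ℂ) * Complex.I)‖ ^ (2*β))⁻¹)
        = ∑' p : ℕ × ℕ, T p θ := fun θ => (hasSum_pt β hβ1 r θ h0 hr).tsum_eq.symm
  have hsummable_c : Summable (fun p : ℕ × ℕ => A β p.1 * A β p.2 * r ^ (p.1 + p.2)) := by
    have := Summable.mul_of_nonneg (summable_A_real β h0 hr) (summable_A_real β h0 hr)
      (fun n => mul_nonneg (A_nonneg β n) (pow_nonneg h0 n))
      (fun n => mul_nonneg (A_nonneg β n) (pow_nonneg h0 n))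
    refine this.congr fun p => ?_
    rw [pow_add]; ring
  have hintT : ∀ p : ℕ × ℕ, ∫ θ in (0:ℝ)..(2*π), T p θ
      = if p.1 = p.2 then A β p.1 * A β p.2 * r ^ (p.1 + p.2) * (2*π) else 0 := by
    intro p
    exact integral_term p.1 p.2 _
  have hI : ∫ θ in (0:ℝ)..(2*π),
      ((‖1 - (r : ℂ) * Complex.exp ((θ : ℂ) * Complex.I)‖ ^ (2*β))⁻¹)
      = (∑' n, A β n ^ 2 * r ^ (2*n)) * (2*π) := by
    rw [intervalIntegral.integral_congr (g := fun θ => ∑' p : ℕ × ℕ, T p θ)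
      (fun θ _ => hpt θ)]
    rw [intervalIntegral.integral_of_le hπ.le]
    rw [MeasureTheory.integral_tsum]
    · -- value of the sum of integrals
      have : ∀ p : ℕ × ℕ,
          ∫ θ in Set.Ioc (0:ℝ) (2*π), T p θ
          = if p.1 = p.2 then A β p.1 * A β p.2 * r ^ (p.1 + p.2) * (2*π) else 0 := by
        intro p
        rw [← intervalIntegral.integral_of_le hπ.le]
        exact hintT p
      rw [tsum_congr this]
      exact tsum_diag β h0 hr
    · intro p
      have hc : Continuous (T p) := by fun_prop
      exact hc.aestronglyMeasurable
    · -- the lintegral bound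
      have hbound : ∀ p : ℕ × ℕ,
          (∫⁻ θ in Set.Ioc (0:ℝ) (2*π), ‖T p θ‖₊)
            ≤ (‖A β p.1 * A β p.2 * r ^ (p.1 + p.2)‖₊ : ENNReal) * ENNReal.ofReal (2*π) := by
        intro p
        have h1 : ∀ θ : ℝ, (‖T p θ‖₊ : ENNReal) ≤ (‖A β p.1 * A β p.2 * r ^ (p.1 + p.2)‖₊ : ENNReal) := by
          intro θ
          rw [ENNReal.coe_le_coe, hT]
          simp only
          rw [nnnorm_mul]
          refine mul_le_of_le_one_right' ?_
          rw [← NNReal.coe_le_coe, coe_nnnorm, Real.norm_eq_abs, NNReal.coe_one]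
          exact Real.abs_cos_le_one _
        calc ∫⁻ θ in Set.Ioc (0:ℝ) (2*π), ‖T p θ‖₊
            ≤ ∫⁻ _ in Set.Ioc (0:ℝ) (2*π), (‖A β p.1 * A β p.2 * r ^ (p.1 + p.2)‖₊ : ENNReal) :=
              MeasureTheory.lintegral_mono fun θ => h1 θ
          _ = (‖A β p.1 * A β p.2 * r ^ (p.1 + p.2)‖₊ : ENNReal) * ENNReal.ofReal (2*π) := by
              rw [MeasureTheory.lintegral_const]
              rw [MeasureTheory.Measure.restrict_apply_univ, Real.volume_Ioc]
              norm_num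
      refine ne_top_of_le_ne_top ?_ (ENNReal.tsum_le_tsum hbound)
      rw [ENNReal.tsum_mul_right]
      apply ENNReal.mul_ne_top
      · rw [ENNReal.tsum_coe_ne_top_iff_summable]
        rw [← NNReal.summable_coe]
        refine hsummable_c.abs.congr fun p => ?_
        rw [coe_nnnorm, Real.norm_eq_abs]
      · exact ENNReal.ofReal_ne_top
  rw [hI]
  -- Step D/E : identify with the polynomial
  have hx0 : (0:ℝ) ≤ r^2 := sq_nonneg r
  have hx1 : r^2 < 1 := by nlinarith
  set x : ℝ := r^2 with hxdef
  -- the Cauchy product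
  set f : ℕ → ℝ := fun j => (-1:ℝ)^j * ((2*β-1).choose j : ℝ) * x^j with hf
  set g : ℕ → ℝ := fun n => A β n ^ 2 * x^n with hg
  have hfvanish : ∀ j ∉ Finset.range (2*β), f j = 0 := by
    intro j hj
    have hj' : ¬ j < 2*β := fun h => hj (Finset.mem_range.mpr h)
    have : 2*β - 1 < j := by omega
    simp only [hf]
    rw [Nat.choose_eq_zero_of_lt this]
    ring
  have hfnorm : Summable fun j => ‖f j‖ :=
    summable_of_ne_finset_zero (s := Finset.range (2*β))
      (fun j hj => by rw [hfvanish j hj, norm_zero])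
  have hgsum : Summable g := by
    refine (summable_A_sq β h0 hr).congr fun n => ?_
    simp only [hg, hxdef, ← pow_mul]
  have hgnorm : Summable fun n => ‖g n‖ := by
    refine hgsum.abs.congr fun n => ?_
    rw [Real.norm_eq_abs]
  have hfsum : ∑' j, f j = (1-x)^(2*β-1) := by
    rw [tsum_eq_sum hfvanish]
    have hbin := add_pow (-x) 1 (2*β-1)
    have h2β : 2*β - 1 + 1 = 2*β := by omega
    rw [h2β] at hbin
    have : (-x + 1) = 1 - x := by ring
    rw [this] at hbin
    rw [hbin]
    refine Finset.sum_congr rfl fun j hj => ?_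
    simp only [hf]
    rw [neg_pow]
    ring
  have hprod := tsum_mul_tsum_eq_tsum_sum_range_of_summable_norm hfnorm hgnorm
  rw [hfsum] at hprod
  have hinner : ∀ k : ℕ, ∑ j ∈ Finset.range (k+1), f j * g (k - j) = cK β k * x^k := by
    intro k
    rw [cK, Finset.sum_mul]
    refine Finset.sum_congr rfl fun j hj => ?_
    have hjk : j ≤ k := by have := Finset.mem_range.mp hj; omega
    have hxj : x ^ j * x ^ (k - j) = x ^ k := by
      rw [← pow_add]; congr 1; omega
    simp only [hf, hg]
    rw [← hxj]
    ring
  rw [tsum_congr hinner] at hprod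
  have htail : ∀ k ∉ Finset.range (2*β-1), cK β k * x^k = 0 := by
    intro k hk
    have hk' : ¬ k < 2*β-1 := fun h => hk (Finset.mem_range.mpr h)
    have : 2*β-1 ≤ k := by omega
    rw [cK_vanish β hβ k this, zero_mul]
  rw [tsum_eq_sum htail] at hprod
  -- conclude
  have hxpow : ∀ k, x^k = r^(2*k) := fun k => by rw [hxdef, ← pow_mul]
  have hgx : ∑' n, A β n ^ 2 * r ^ (2*n) = ∑' n, g n := by
    refine tsum_congr fun n => ?_
    simp only [hg]
    rw [hxpow n]
  rw [hgx]
  have hfinal : ∑ k ∈ Finset.range (2*β-1), cK β k * r ^ (2*k)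
      = ∑ k ∈ Finset.range (2*β-1), cK β k * x ^ k :=
    Finset.sum_congr rfl fun k _ => by rw [hxpow k]
  rw [hfinal, ← hprod]
  have hπ' : (2*π) ≠ 0 := ne_of_gt hπ
  field_simp

lemma aCoef_eq (β : ℕ) (hβ : 2 ≤ β) :
    aCoef β = ∑ k ∈ Finset.range (2*β-1), cK β k := by
  unfold aCoef cK
  refine Finset.sum_congr rfl fun k _ => Finset.sum_congr rfl fun j _ => ?_
  unfold A
  have h : k - j + (β - 1) = k - j + β - 1 := by omega
  rw [h]

lemma bCoef_eq (β : ℕ) (hβ : 2 ≤ β) :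
    bCoef β = -∑ k ∈ Finset.range (2*β-1), (2*(k:ℝ)) * cK β k := by
  unfold bCoef
  congr 1
  have hsub : Finset.Icc 1 (2*β-2) ⊆ Finset.range (2*β-1) := by
    intro k hk
    have := Finset.mem_Icc.mp hk
    exact Finset.mem_range.mpr (by omega)
  rw [← Finset.sum_subset hsub]
  · refine Finset.sum_congr rfl fun k _ => ?_
    unfold cK A
    congr 1
    refine Finset.sum_congr rfl fun j _ => ?_
    have h : k - j + (β - 1) = k - j + β - 1 := by omega
    rw [h]
  · intro k hk1 hk2
    have hk0 : k = 0 := by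
      have h1 := Finset.mem_range.mp hk1
      have h2 : ¬(1 ≤ k ∧ k ≤ 2*β-2) := fun h => hk2 (Finset.mem_Icc.mpr h)
      omega
    subst hk0
    push_cast
    ring

theorem stmt1' (β : ℕ) (hβ : 2 ≤ β) :
    ∃ K > 0, ∀ r ∈ Set.Ico (0 : ℝ) 1,
      |(1 / (2 * π)) *
          (∫ θ in (0 : ℝ)..(2 * π),
            bblock β ((r : ℂ) * Complex.exp ((θ : ℂ) * Complex.I)))
        - aCoef β - bCoef β * (1 - r)| ≤ K * (1 - r) ^ 2 := by
  set K : ℝ := (∑ k ∈ Finset.range (2*β-1), |cK β k| * (2*(k:ℝ))^2) + 1 with hK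
  have hKpos : 0 < K := by
    have : 0 ≤ ∑ k ∈ Finset.range (2*β-1), |cK β k| * (2*(k:ℝ))^2 :=
      Finset.sum_nonneg fun k _ => mul_nonneg (abs_nonneg _) (sq_nonneg _)
    linarith
  refine ⟨K, hKpos, fun r hr => ?_⟩
  obtain ⟨h0, hr1⟩ := hr
  rw [mean_value β hβ r h0 hr1]
  have hdiff : ∑ k ∈ Finset.range (2*β-1), cK β k * r ^ (2*k) - aCoef β - bCoef β * (1 - r)
      = ∑ k ∈ Finset.range (2*β-1), cK β k * (r^(2*k) - 1 + (2*(k:ℝ))*(1-r)) := by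
    rw [aCoef_eq β hβ, bCoef_eq β hβ, neg_mul, sub_neg_eq_add, Finset.sum_mul,
      ← Finset.sum_sub_distrib, ← Finset.sum_add_distrib]
    exact Finset.sum_congr rfl fun k _ => by ring
  rw [hdiff]
  calc |∑ k ∈ Finset.range (2*β-1), cK β k * (r^(2*k) - 1 + (2*(k:ℝ))*(1-r))|
      ≤ ∑ k ∈ Finset.range (2*β-1), |cK β k * (r^(2*k) - 1 + (2*(k:ℝ))*(1-r))| :=
        Finset.abs_sum_le_sum_abs _ _
    _ ≤ ∑ k ∈ Finset.range (2*β-1), |cK β k| * ((2*(k:ℝ))^2 * (1-r)^2) := by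
        refine Finset.sum_le_sum fun k _ => ?_
        rw [abs_mul]
        refine mul_le_mul_of_nonneg_left ?_ (abs_nonneg _)
        have := pow_taylor_bound r h0 hr1.le (2*k)
        calc |r^(2*k) - 1 + (2*(k:ℝ))*(1-r)|
            = |r^(2*k) - 1 + ((2*k : ℕ):ℝ)*(1-r)| := by push_cast; ring_nf
          _ ≤ ((2*k : ℕ):ℝ)^2 * (1-r)^2 := this
          _ = (2*(k:ℝ))^2 * (1-r)^2 := by push_cast; ring
    _ = (∑ k ∈ Finset.range (2*β-1), |cK β k| * (2*(k:ℝ))^2) * (1-r)^2 := by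
        rw [Finset.sum_mul]
        exact Finset.sum_congr rfl fun k _ => by ring
    _ ≤ K * (1-r)^2 := by
        refine mul_le_mul_of_nonneg_right ?_ (sq_nonneg _)
        rw [hK]; linarith

end Stmt1Aux

theorem stmt1 (β : ℕ) (hβ : 2 ≤ β) :
    ∃ K > 0, ∀ r ∈ Set.Ico (0 : ℝ) 1,
      |(1 / (2 * π)) *
          (∫ θ in (0 : ℝ)..(2 * π),
            bblock β ((r : ℂ) * Complex.exp ((θ : ℂ) * Complex.I)))
        - aCoef β - bCoef β * (1 - r)| ≤ K * (1 - r) ^ 2 := by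
  exact Stmt1Aux.stmt1' β hβ
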